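/- (Rural Hospitals Theorem) In any instance of Stable Marriage, the set of people who are matched is the same in every stable matching: if μ and μ' are both stable, then a person a is matched by μ if and only if a is matched by μ'. -/
import Mathlib


open scoped Classical

/-- A Stable Marriage instance: `acc` is the mutual acceptability relation,
`pm m w` is man `m`'s preference value for woman `w` (lower = better),
`pw w m` is woman `w`'s preference value for man `m`. -/
structure SMInst (M W : Type*) where
  acc : M → W → Prop
  pm : M → W → ℕ
  pw : W → M → ℕ

namespace SMInst

variable {M W : Type*} (I : SMInst M W)

/-- A matching, encoded as a relation: matched pairs are acceptable and
each person appears in at most one pair. -/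
def IsMatching (r : M → W → Prop) : Prop :=
  (∀ m w, r m w → I.acc m w) ∧
  (∀ m w w', r m w → r m w' → w = w') ∧
  (∀ m m' w, r m w → r m' w → m = m')

/-- `m` is matched by `r`. -/
def MMatched (r : M → W → Prop) (m : M) : Prop := ∃ w, r m w

/-- `w` is matched by `r`. -/
def WMatched (r : M → W → Prop) (w : W) : Prop := ∃ m, r m w

/-- `(m, w)` blocks `r`: the pair is acceptable, `m` is unmatched or prefers `w`
to his partner, and `w` is unmatched or prefers `m` to her partner. -/
def Blocks (r : M → W → Prop) (m : M) (w : W) : Prop :=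
  I.acc m w ∧
  (∀ w', r m w' → I.pm m w < I.pm m w') ∧
  (∀ m', r m' w → I.pw w m < I.pw w m')

/-- A stable matching: a matching with no blocking pair. -/
def IsStable (r : M → W → Prop) : Prop :=
  I.IsMatching r ∧ ∀ m w, ¬ I.Blocks r m w

/-- Sum of the men's preference values over the pairs of a matching. -/
noncomputable def sumM [Fintype M] [Fintype W] (r : M → W → Prop) : ℕ :=
  ∑ p ∈ Finset.univ.filter (fun p : M × W => r p.1 p.2), I.pm p.1 p.2

/-- Sum of the women's preference values over the pairs of a matching. -/
noncomputable def sumW [Fintype M] [Fintype W] (r : M → W → Prop) : ℕ :=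
  ∑ p ∈ Finset.univ.filter (fun p : M × W => r p.1 p.2), I.pw p.2 p.1

/-- Balance of a matching. -/
noncomputable def bal [Fintype M] [Fintype W] (r : M → W → Prop) : ℕ :=
  max (I.sumM r) (I.sumW r)

/-- Blocking pair for a perfect matching given as an equivalence `M ≃ W`. -/
def BlocksE (e : M ≃ W) (m : M) (w : W) : Prop :=
  I.acc m w ∧ I.pm m w < I.pm m (e m) ∧ I.pw w m < I.pw w (e.symm w)

/-- A stable perfect matching: all matched pairs acceptable, no blocking pair. -/
def IsStableE (e : M ≃ W) : Prop :=
  (∀ m, I.acc m (e m)) ∧ ∀ m w, ¬ I.BlocksE e m w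

/-- Sum of the men's preference values in a perfect matching. -/
def sumME [Fintype M] (e : M ≃ W) : ℕ := ∑ m, I.pm m (e m)

/-- Sum of the women's preference values in a perfect matching. -/
def sumWE [Fintype W] (e : M ≃ W) : ℕ := ∑ w, I.pw w (e.symm w)

/-- Balance of a perfect matching. -/
def balE [Fintype M] [Fintype W] (e : M ≃ W) : ℕ := max (I.sumME e) (I.sumWE e)

end SMInst

lemma rh_key {M W : Type*} [Finite M] (I : SMInst M W)
    (hinjm : ∀ m w w', I.acc m w → I.acc m w' → I.pm m w = I.pm m w' → w = w')
    (hinjw : ∀ w m m', I.acc m w → I.acc m' w → I.pw w m = I.pw w m' → m = m')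
    (μ μ' : M → W → Prop) (hμ : I.IsStable μ) (hμ' : I.IsStable μ')
    (m0 : M) (hm : SMInst.MMatched μ m0) : SMInst.MMatched μ' m0 := by
  classical
  by_contra hun
  have hun' : ∀ w, ¬ μ' m0 w := fun w h => hun ⟨w, h⟩
  obtain ⟨⟨hacc, huw, hum⟩, hnb⟩ := hμ
  obtain ⟨⟨hacc', huw', hum'⟩, hnb'⟩ := hμ'
  obtain ⟨w0, hw0⟩ := hm
  -- invariant
  set Inv : M × W → Prop := fun p =>
    μ p.1 p.2 ∧ ∀ w₂, μ' p.1 w₂ → I.pm p.1 p.2 < I.pm p.1 w₂ with hInv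
  have inv0 : Inv (m0, w0) := ⟨hw0, fun w₂ h => absurd h (hun' w₂)⟩
  -- step
  have step : ∀ p : {q : M × W // Inv q}, ∃ p' : {q : M × W // Inv q},
      μ' p'.1.1 p.1.2 := by
    rintro ⟨⟨m, w⟩, hmw, hpref⟩
    -- (m,w) would block μ' unless w has a μ'-partner she weakly prefers
    have haccmw : I.acc m w := hacc m w hmw
    have hQ : ¬ ∀ m', μ' m' w → I.pw w m < I.pw w m' :=
      fun hQ => hnb' m w ⟨haccmw, hpref, hQ⟩
    push_neg at hQ
    obtain ⟨m₁, hm₁, hle₁⟩ := hQ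
    have hm₁ne : m₁ ≠ m := by
      rintro rfl
      exact absurd (hpref w hm₁) (lt_irrefl _)
    have hlt₁ : I.pw w m₁ < I.pw w m := by
      rcases lt_or_eq_of_le hle₁ with h | h
      · exact h
      · exact absurd (hinjw w m₁ m (hacc' _ _ hm₁) haccmw h) hm₁ne
    -- (m₁, w) would block μ unless m₁ has a μ-partner he weakly prefers
    have haccm₁w : I.acc m₁ w := hacc' _ _ hm₁
    have hQ₁ : ∀ m', μ m' w → I.pw w m₁ < I.pw w m' := by
      intro m' hm'
      have : m' = m := hum m' m w hm' hmw
      subst this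
      exact hlt₁
    have hP : ¬ ∀ w', μ m₁ w' → I.pm m₁ w < I.pm m₁ w' :=
      fun hP => hnb m₁ w ⟨haccm₁w, hP, hQ₁⟩
    push_neg at hP
    obtain ⟨w₁, hw₁, hle₂⟩ := hP
    have hw₁ne : w₁ ≠ w := by
      rintro rfl
      exact hm₁ne (hum m₁ m w₁ hw₁ hmw)
    have hlt₂ : I.pm m₁ w₁ < I.pm m₁ w := by
      rcases lt_or_eq_of_le hle₂ with h | h
      · exact h
      · exact absurd (hinjm m₁ w₁ w (hacc _ _ hw₁) haccm₁w h) hw₁ne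
    refine ⟨⟨(m₁, w₁), hw₁, ?_⟩, hm₁⟩
    intro w₂ h₂
    have : w₂ = w := huw' m₁ w₂ w h₂ hm₁
    subst this
    exact hlt₂
  choose next hnext using step
  let f : ℕ → {q : M × W // Inv q} := fun n =>
    Nat.rec ⟨(m0, w0), inv0⟩ (fun _ p => next p) n
  have hfs : ∀ n, f (n + 1) = next (f n) := fun n => rfl
  have hlink : ∀ n, μ' (f (n + 1)).1.1 (f n).1.2 := fun n => by
    rw [hfs]; exact hnext (f n)
  have hfμ : ∀ n, μ (f n).1.1 (f n).1.2 := fun n => (f n).2.1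
  -- injectivity of the men
  have hinj : ∀ i j, i < j → (f i).1.1 ≠ (f j).1.1 := by
    intro i
    induction i with
    | zero =>
      intro j hj heq
      obtain ⟨j', rfl⟩ : ∃ j', j = j' + 1 := ⟨j - 1, by omega⟩
      have : (f 0).1.1 = m0 := rfl
      rw [this] at heq
      exact hun' _ (heq ▸ hlink j')
    | succ i ih =>
      intro j hj heq
      obtain ⟨j', rfl⟩ : ∃ j', j = j' + 1 := ⟨j - 1, by omega⟩
      have hww : (f i).1.2 = (f j').1.2 :=
        huw' _ _ _ (hlink i) (heq ▸ hlink j')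
      have hmm : (f i).1.1 = (f j').1.1 :=
        hum _ _ _ (hfμ i) (hww ▸ hfμ j')
      exact ih j' (by omega) hmm
  obtain ⟨x, y, hne, hxy⟩ :=
    Finite.exists_ne_map_eq_of_infinite (fun n => (f n).1.1)
  rcases hne.lt_or_gt with h | h
  · exact hinj x y h hxy
  · exact hinj y x h hxy.symm

/-- Rural Hospitals Theorem: the set of matched people is the
same in every stable matching. -/
theorem rural_hospitals {M W : Type*} [Fintype M] [Fintype W] (I : SMInst M W)
    (hinjm : ∀ m w w', I.acc m w → I.acc m w' → I.pm m w = I.pm m w' → w = w')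
    (hinjw : ∀ w m m', I.acc m w → I.acc m' w → I.pw w m = I.pw w m' → m = m')
    (μ μ' : M → W → Prop) (hμ : I.IsStable μ) (hμ' : I.IsStable μ') :
    (∀ m, SMInst.MMatched μ m ↔ SMInst.MMatched μ' m) ∧
    (∀ w, SMInst.WMatched μ w ↔ SMInst.WMatched μ' w) := by
  constructor
  · intro m
    exact ⟨rh_key I hinjm hinjw μ μ' hμ hμ' m, rh_key I hinjm hinjw μ' μ hμ' hμ m⟩
  · intro w
    set J : SMInst W M := ⟨fun w m => I.acc m w, I.pw, I.pm⟩ with hJ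
    have hflip : ∀ r : M → W → Prop, I.IsStable r → J.IsStable (fun w m => r m w) := by
      rintro r ⟨⟨hacc, huw, hum⟩, hnb⟩
      refine ⟨⟨fun w m h => hacc m w h, fun w m m' h h' => hum m m' w h h',
        fun w w' m h h' => huw m w w' h h'⟩, ?_⟩
      rintro w' m' ⟨h1, h2, h3⟩
      exact hnb m' w' ⟨h1, h3, h2⟩
    exact ⟨rh_key J hinjw hinjm _ _ (hflip μ hμ) (hflip μ' hμ') w,
      rh_key J hinjw hinjm _ _ (hflip μ' hμ') (hflip μ hμ) w⟩
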